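/- Let V be a finite-dimensional real vector space, Q a quadratic form on V, Z : V → ℂ an ℝ-linear map with ker Z negative definite for Q, and suppose Q(v) = |Z(v)|² − ‖p(v)‖² where p : V → ker Z is the Q-orthogonal projection and ‖·‖ is the norm given by −Q on ker Z. If u : ker Z → ℂ is ℝ-linear with operator norm ‖u‖ < 1, then ker(Z + u ∘ p) is also negative definite with respect to Q. -/

import Mathlib

/-- Let `V` be a finite-dimensional real vector space, `Q` a quadratic form
on `V`, `Z : V → ℂ` an `ℝ`-linear map whose kernel is negative definite for `Q`, and suppose
`Q(v) = |Z(v)|² − ‖p(v)‖²` where `p : V → ker Z` is the `Q`-orthogonal projection and `‖·‖` is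
the norm given by `−Q` on `ker Z` (so `‖k‖² = −Q(k)`, i.e. `Q(v) = |Z(v)|² + Q(p(v))`).
If `u : ker Z → ℂ` is `ℝ`-linear with operator norm `‖u‖ < 1` (with respect to that norm), then
`ker (Z + u ∘ p)` is also negative definite with respect to `Q`. -/
theorem stmt1 {V : Type*} [AddCommGroup V] [Module ℝ V] [FiniteDimensional ℝ V]
    (Q : QuadraticForm ℝ V) (Z : V →ₗ[ℝ] ℂ)
    (hker : ∀ v ∈ LinearMap.ker Z, v ≠ 0 → Q v < 0)
    (p : V →ₗ[ℝ] LinearMap.ker Z)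
    (hp : ∀ k : LinearMap.ker Z, p (k : V) = k)
    (hQ : ∀ v : V, Q v = ‖Z v‖ ^ 2 + Q ((p v : V)))
    (u : LinearMap.ker Z →ₗ[ℝ] ℂ)
    (hu : ∃ c : ℝ, 0 ≤ c ∧ c < 1 ∧ ∀ k : LinearMap.ker Z,
      ‖u k‖ ^ 2 ≤ c ^ 2 * (- Q (k : V))) :
    ∀ v : V, Z v + u (p v) = 0 → v ≠ 0 → Q v < 0 := by
  obtain ⟨c, hc0, hc1, hc⟩ := hu
  intro v hv hv0
  -- p v ≠ 0
  have hpv : p v ≠ 0 := by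
    intro h
    have hZv : Z v = 0 := by
      have : u (p v) = 0 := by rw [h, map_zero]
      rw [this, add_zero] at hv
      exact hv
    have hvk : v ∈ LinearMap.ker Z := hZv
    have : p v = ⟨v, hvk⟩ := hp ⟨v, hvk⟩
    rw [h] at this
    exact hv0 (by simpa using congrArg Subtype.val this.symm)
  have hQpv : Q ((p v : V)) < 0 := by
    refine hker _ (p v).2 ?_
    intro h
    exact hpv (by ext; simpa using h)
  have hZv : Z v = - u (p v) := by linear_combination hv
  have h1 : ‖Z v‖ ^ 2 ≤ c ^ 2 * (- Q ((p v : V))) := by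
    rw [hZv]
    simpa using hc (p v)
  have := hQ v
  nlinarith [this, h1, hQpv, mul_self_lt_mul_self hc0 hc1, sq_nonneg c]
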